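/- For words u, v over Σ ∪ {⊤}: there is a graph homomorphism g(u) ◁ g(v) (a label-, input-, and output-preserving map from g(v) to g(u)) if and only if there exists n ∈ ℕ with (u⊤)ⁿu →_T* v. -/

import Mathlib

/-- One rewriting step: `u →_T v` iff `u = l ++ w ++ r` and `v = l ++ ⊤ :: r`. -/
def stepT {α : Type*} (top : α) (u v : List α) : Prop :=
  ∃ l w r : List α, u = l ++ w ++ r ∧ v = l ++ top :: r

/-- `tpow top w n = (w⊤)ⁿw`. -/
def tpow {α : Type*} (top : α) (w : List α) : ℕ → List α
  | 0 => w
  | n + 1 => w ++ top :: tpow top w n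

/-- `f` is a homomorphism from the graph `g(v)` to the graph `g(u)`. -/
def IsWordGraphHom {α : Type*} (top : α) (u v : List α)
    (f : Fin (v.length + 1) → Fin (u.length + 1)) : Prop :=
  f 0 = 0 ∧ f (Fin.last v.length) = Fin.last u.length ∧
    ∀ i : Fin v.length, v.get i ≠ top →
      ∃ j : Fin u.length, u.get j = v.get i ∧
        f i.castSucc = j.castSucc ∧ f i.succ = j.succ

/-- `g(u) ◁ g(v)`: there exists a graph homomorphism from `g(v)` to `g(u)`. -/
def GraphLE {α : Type*} (top : α) (u v : List α) : Prop :=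
  ∃ f : Fin (v.length + 1) → Fin (u.length + 1), IsWordGraphHom top u v f

namespace GLEAux

variable {α : Type*}

lemma stepT_cons (top a : α) {x y : List α} (h : stepT top x y) :
    stepT top (a :: x) (a :: y) := by
  obtain ⟨l, w, r, hx, hy⟩ := h
  exact ⟨a :: l, w, r, by simp [hx], by simp [hy]⟩

lemma rtg_cons (top a : α) {x y : List α}
    (h : Relation.ReflTransGen (stepT top) x y) :
    Relation.ReflTransGen (stepT top) (a :: x) (a :: y) :=
  h.lift (a :: ·) (fun _ _ => stepT_cons top a)

def rep (top : α) (u : List α) : ℕ → List α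
  | 0 => []
  | n + 1 => top :: (u ++ rep top u n)

lemma tpow_eq (top : α) (u : List α) (n : ℕ) :
    tpow top u n = u ++ rep top u n := by
  induction n with
  | zero => simp [tpow, rep]
  | succ n ih => simp [tpow, rep, ih]

lemma auxB (top : α) (u : List α) (v : List α) :
    ∀ (f : Fin (v.length + 1) → Fin (u.length + 1)),
    f (Fin.last v.length) = Fin.last u.length →
    (∀ i : Fin v.length, v.get i ≠ top →
      ∃ j : Fin u.length, u.get j = v.get i ∧
        f i.castSucc = j.castSucc ∧ f i.succ = j.succ) →
    ∃ n, Relation.ReflTransGen (stepT top)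
      (u.drop (f 0).val ++ rep top u n) v := by
  induction v with
  | nil =>
    intro f hlast _
    have h0 : f 0 = Fin.last u.length := hlast
    refine ⟨0, ?_⟩
    rw [h0]
    simp only [rep, Fin.last, List.append_nil, List.drop_length]
    exact Relation.ReflTransGen.refl
  | cons a v ih =>
    intro f hlast hedge
    obtain ⟨n', hn'⟩ := ih (fun i => f i.succ)
      (by
        have : (Fin.last v.length).succ = Fin.last (v.length + 1) := Fin.succ_last _
        simpa [this] using hlast)
      (fun i hi => by
        obtain ⟨j, hj1, hj2, hj3⟩ := hedge i.succ (by simpa using hi)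
        refine ⟨j, by simpa using hj1, ?_, hj3⟩
        rw [← hj2]
        congr 1)
    by_cases ha : a = top
    · subst ha
      refine ⟨n' + 1, ?_⟩
      refine Relation.ReflTransGen.head ?_ (rtg_cons a a hn')
      refine ⟨[], u.drop (f 0).val ++ a :: u.take (f ((0 : Fin (v.length + 1)).succ)).val,
        u.drop (f ((0 : Fin (v.length + 1)).succ)).val ++ rep a u n', ?_, ?_⟩
      · simp only [rep, List.nil_append, List.append_assoc, List.cons_append]
        rw [← List.append_assoc (u.take (f ((0 : Fin (v.length + 1)).succ)).val),
          List.take_append_drop]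
      · simp
    · obtain ⟨k, hk1, hk2, hk3⟩ := hedge ⟨0, by simp⟩ (by simpa using ha)
      have hget : u.get k = a := by simpa using hk1
      have h0 : f 0 = k.castSucc := by
        have : ((⟨0, by simp⟩ : Fin (v.length + 1)).castSucc : Fin (v.length + 2)) = 0 := rfl
        rw [← this]; exact hk2
      have h1 : f ((0 : Fin (v.length + 1)).succ) = k.succ := hk3
      refine ⟨n', ?_⟩
      have hdrop : u.drop (f 0).val = a :: u.drop (f ((0 : Fin (v.length + 1)).succ)).val := by
        rw [h0, h1]
        have hk : (k : ℕ) < u.length := k.isLt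
        simp only [Fin.coe_castSucc, Fin.val_succ]
        rw [List.drop_eq_getElem_cons hk]
        simp [hget.symm, List.get_eq_getElem]
      rw [hdrop]
      exact rtg_cons top a hn'

lemma graphLE_refl (top : α) (u : List α) : GraphLE top u u :=
  ⟨id, rfl, rfl, fun i _ => ⟨i, rfl, rfl, rfl⟩⟩

lemma graphLE_trans (top : α) {u v w : List α}
    (h1 : GraphLE top u v) (h2 : GraphLE top v w) : GraphLE top u w := by
  obtain ⟨f, hf0, hfl, hfe⟩ := h1
  obtain ⟨g, hg0, hgl, hge⟩ := h2
  refine ⟨f ∘ g, by simp [hg0, hf0], by simp [hgl, hfl], fun i hi => ?_⟩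
  obtain ⟨j, hj1, hj2, hj3⟩ := hge i hi
  obtain ⟨k, hk1, hk2, hk3⟩ := hfe j (by rw [hj1]; exact hi)
  exact ⟨k, by rw [hk1, hj1], by simp [hj2, hk2], by simp [hj3, hk3]⟩

lemma graphLE_glue (top : α) {u x : List α} (h : GraphLE top u x) :
    GraphLE top u (u ++ top :: x) := by
  obtain ⟨g, hg0, hgl, hge⟩ := h
  have hL : (u ++ top :: x).length = u.length + 1 + x.length := by
    simp only [List.length_append, List.length_cons]; omega
  refine ⟨fun p => if hp : p.val ≤ u.length then ⟨p.val, by omega⟩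
    else g ⟨p.val - (u.length + 1), by have := p.isLt; omega⟩, ?_, ?_, ?_⟩
  · simp only [Fin.val_zero, dif_pos (Nat.zero_le _)]
    rfl
  · have h1 : ¬ ((Fin.last (u ++ top :: x).length).val ≤ u.length) := by
      simp only [Fin.val_last]; omega
    simp only [dif_neg h1]
    rw [← hgl]
    congr 1
    apply Fin.ext
    simp only [Fin.val_last]
    omega
  · intro i hi
    have hilt : i.val < u.length + 1 + x.length := by have := i.isLt; omega
    rcases lt_trichotomy i.val u.length with hc | hc | hc
    · refine ⟨⟨i.val, hc⟩, ?_, ?_, ?_⟩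
      · simp only [List.get_eq_getElem]
        rw [List.getElem_append_left hc]
      · have hcond : (i.castSucc).val ≤ u.length := by
          simp only [Fin.coe_castSucc]; omega
        simp only [dif_pos hcond]
        rfl
      · have hcond : (i.succ).val ≤ u.length := by
          simp only [Fin.val_succ]; omega
        simp only [dif_pos hcond]
        rfl
    · exfalso
      apply hi
      simp only [List.get_eq_getElem]
      rw [List.getElem_append_right (by omega)]
      simp [hc]
    · have hix : i.val - (u.length + 1) < x.length := by omega
      obtain ⟨j, hj1, hj2, hj3⟩ := hge ⟨i.val - (u.length + 1), hix⟩ (by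
        simp only [List.get_eq_getElem] at hi ⊢
        intro hcon
        apply hi
        rw [List.getElem_append_right (by omega)]
        simp only [List.getElem_cons]
        rw [dif_neg (by omega)]
        exact hcon)
      refine ⟨j, ?_, ?_, ?_⟩
      · rw [hj1]
        simp only [List.get_eq_getElem]
        rw [List.getElem_append_right (by omega)]
        simp only [List.getElem_cons]
        rw [dif_neg (by omega)]
        rfl
      · have hcond : ¬ ((i.castSucc).val ≤ u.length) := by
          simp only [Fin.coe_castSucc]; omega
        simp only [dif_neg hcond]
        rw [← hj2]
        congr 1
      · have hcond : ¬ ((i.succ).val ≤ u.length) := by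
          simp only [Fin.val_succ]; omega
        simp only [dif_neg hcond]
        rw [← hj3]
        congr 1
        apply Fin.ext
        simp only [Fin.val_succ]
        omega

lemma graphLE_tpow (top : α) (u : List α) (n : ℕ) :
    GraphLE top u (tpow top u n) := by
  induction n with
  | zero => exact graphLE_refl top u
  | succ n ih => exact graphLE_glue top ih

lemma graphLE_step (top : α) {v v' : List α} (h : stepT top v v') :
    GraphLE top v v' := by
  obtain ⟨l, w, r, hv, hv'⟩ := h
  subst hv hv'
  have hL' : (l ++ top :: r).length = l.length + 1 + r.length := by
    simp only [List.length_append, List.length_cons]; omega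
  have hL : (l ++ w ++ r).length = l.length + w.length + r.length := by
    simp only [List.length_append]
  refine ⟨fun p => if hp : p.val ≤ l.length then ⟨p.val, by omega⟩
    else ⟨p.val + w.length - 1, by have := p.isLt; omega⟩, ?_, ?_, ?_⟩
  · simp only [Fin.val_zero, dif_pos (Nat.zero_le _)]
    rfl
  · have h1 : ¬ ((Fin.last (l ++ top :: r).length).val ≤ l.length) := by
      simp only [Fin.val_last]; omega
    simp only [dif_neg h1]
    apply Fin.ext
    simp only [Fin.val_last]
    omega
  · intro i hi
    have hilt : i.val < l.length + 1 + r.length := by have := i.isLt; omega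
    rcases lt_trichotomy i.val l.length with hc | hc | hc
    · refine ⟨⟨i.val, by omega⟩, ?_, ?_, ?_⟩
      · simp only [List.get_eq_getElem]
        rw [List.getElem_append_left (by simp only [List.length_append]; try omega),
          List.getElem_append_left hc, List.getElem_append_left hc]
      · have hcond : (i.castSucc).val ≤ l.length := by
          simp only [Fin.coe_castSucc]; omega
        simp only [dif_pos hcond]
        rfl
      · have hcond : (i.succ).val ≤ l.length := by
          simp only [Fin.val_succ]; omega
        simp only [dif_pos hcond]
        rfl
    · exfalso
      apply hi
      simp only [List.get_eq_getElem]
      rw [List.getElem_append_right (by omega)]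
      simp [hc]
    · refine ⟨⟨i.val + w.length - 1, by omega⟩, ?_, ?_, ?_⟩
      · simp only [List.get_eq_getElem]
        rw [List.getElem_append_right (show (l ++ w).length ≤ i.val + w.length - 1 by
          simp only [List.length_append]; omega)]
        rw [List.getElem_append_right (show l.length ≤ i.val by omega)]
        simp only [List.getElem_cons, List.length_append]
        rw [dif_neg (by omega)]
        congr 1
        omega
      · have hcond : ¬ ((i.castSucc).val ≤ l.length) := by
          simp only [Fin.coe_castSucc]; omega
        simp only [dif_neg hcond]
        apply Fin.ext
        simp only [Fin.coe_castSucc]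
      · have hcond : ¬ ((i.succ).val ≤ l.length) := by
          simp only [Fin.val_succ]; omega
        simp only [dif_neg hcond]
        apply Fin.ext
        simp only [Fin.val_succ]
        omega

end GLEAux

theorem graphLE_iff_tpow_rewrites {α : Type*} (top : α) (u v : List α) :
    GraphLE top u v ↔
      ∃ n : ℕ, Relation.ReflTransGen (stepT top) (tpow top u n) v := by
  constructor
  · rintro ⟨f, hf0, hfl, hfe⟩
    obtain ⟨n, hn⟩ := GLEAux.auxB top u v f hfl hfe
    refine ⟨n, ?_⟩
    rw [hf0] at hn
    simpa [GLEAux.tpow_eq] using hn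
  · rintro ⟨n, hn⟩
    induction hn with
    | refl => exact GLEAux.graphLE_tpow top u n
    | tail _ hbc ih => exact GLEAux.graphLE_trans top ih (GLEAux.graphLE_step top hbc)
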